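/- For every positive equivalence relation η such that the η-equivalence class [x] is infinite for every x ∈ ℕ, the ascending family 𝒜_η is conservatively explanatorily learnable. -/

import Mathlib

namespace PEL

/-- Evaluation of the `e`-th partial recursive function (via the standard
numbering of `Nat.Partrec.Code`). -/
def evalCode (e : ℕ) (x : ℕ) : Part ℕ :=
  (Denumerable.ofNat Nat.Partrec.Code e).eval x

/-- The `e`-th recursively enumerable set `W_e = dom φ_e`. -/
def W (e : ℕ) : Set ℕ := {x | (evalCode e x).Dom}

/-- A set is r.e. iff it equals some `W_e`. -/
def RESet (S : Set ℕ) : Prop := ∃ e, W e = S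

/-- A positive equivalence relation: an r.e. equivalence relation on ℕ
with infinitely many equivalence classes. -/
structure PosEq where
  rel : ℕ → ℕ → Prop
  equiv : Equivalence rel
  re : ∃ e, ∀ x y, rel x y ↔ Nat.pair x y ∈ W e
  classes_infinite : (Set.range fun x => {y | rel x y}).Infinite

/-- The η-equivalence class of `x`. -/
def classOf (η : PosEq) (x : ℕ) : Set ℕ := {y | η.rel x y}

/-- A set is η-closed iff it is a union of η-equivalence classes. -/
def EtaClosed (η : PosEq) (S : Set ℕ) : Prop := ∀ x ∈ S, classOf η x ⊆ S

/-- A set is η-finite iff it is a union of finitely many η-equivalence classes. -/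
def EtaFinite (η : PosEq) (S : Set ℕ) : Prop :=
  EtaClosed η S ∧ (classOf η '' S).Finite

/-- A set is η-infinite iff it is a union of infinitely many η-equivalence classes. -/
def EtaInfinite (η : PosEq) (S : Set ℕ) : Prop :=
  EtaClosed η S ∧ (classOf η '' S).Infinite

/-- `f` is a one-one uniformly r.e. numbering of the class `C`:
`f` is computable, `i ↦ W_{f i}` is injective, and `C = {W_{f i} : i ∈ ℕ}`. -/
def OneOneNumbering (f : ℕ → ℕ) (C : Set (Set ℕ)) : Prop :=
  Computable f ∧ (∀ i j, W (f i) = W (f j) → i = j) ∧ C = Set.range fun i => W (f i)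

/-- An η-family: an (automatically infinite) class of η-closed r.e. sets
admitting a one-one uniformly r.e. numbering. -/
def EtaFamily (η : PosEq) (C : Set (Set ℕ)) : Prop :=
  (∀ L ∈ C, EtaClosed η L) ∧ ∃ f, OneOneNumbering f C

/-- `a η n` is the `n`-th (in ascending order) least representative of an
η-equivalence class. -/
noncomputable def a (η : PosEq) (n : ℕ) : ℕ := Nat.nth (fun x => ∀ y, η.rel x y → x ≤ y) n

/-- `A η n = [a_0] ∪ … ∪ [a_{n-1}]`. -/
def A (η : PosEq) (n : ℕ) : Set ℕ := {x | ∃ m < n, η.rel (a η m) x}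

/-- The ascending family `𝒜_η = {A_n : n ∈ ℕ}`. -/
def ascendingFamily (η : PosEq) : Set (Set ℕ) := Set.range (A η)

/-- A learner: a map from finite sequences over ℕ ∪ {#} (with `none` as the
pause symbol `#`) to hypotheses in ℕ ∪ {?} (with `none` as `?`). -/
abbrev Learner := List (Option ℕ) → Option ℕ

/-- The content of a text. -/
def cntT (T : ℕ → Option ℕ) : Set ℕ := {x | ∃ n, T n = some x}

/-- `T` is a text for `L`. -/
def IsText (T : ℕ → Option ℕ) (L : Set ℕ) : Prop := cntT T = L

/-- The initial segment `T[n] = T(0), …, T(n-1)`. -/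
def seg (T : ℕ → Option ℕ) (n : ℕ) : List (Option ℕ) := (List.range n).map T

/-- The content of a finite sequence. -/
def cntL (σ : List (Option ℕ)) : Set ℕ := {x | some x ∈ σ}

/-- Explanatory learning with hypotheses interpreted in hypothesis space `H`. -/
def ExLearnsIn (H : ℕ → Set ℕ) (M : Learner) (C : Set (Set ℕ)) : Prop :=
  ∀ L ∈ C, ∀ T, IsText T L →
    ∃ n e, M (seg T n) = some e ∧ H e = L ∧ ∀ j, n ≤ j → M (seg T j) = M (seg T n)

/-- Behaviourally correct learning with hypothesis space `H`. -/
def BCLearnsIn (H : ℕ → Set ℕ) (M : Learner) (C : Set (Set ℕ)) : Prop :=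
  ∀ L ∈ C, ∀ T, IsText T L →
    ∃ n, ∀ j, n ≤ j → ∃ e, M (seg T j) = some e ∧ H e = L

/-- Finite (one-shot) learning with hypothesis space `H`. -/
def FinLearnsIn (H : ℕ → Set ℕ) (M : Learner) (C : Set (Set ℕ)) : Prop :=
  ∀ L ∈ C, ∀ T, IsText T L →
    ∃ n e, M (seg T n) = some e ∧ H e = L ∧ (∀ m, m < n → M (seg T m) = none) ∧
      ∀ j, n ≤ j → M (seg T j) = M (seg T n)

/-- The sequence of hypotheses of `M` on text `T` converges. -/
def ConvergesOn (M : Learner) (T : ℕ → Option ℕ) : Prop :=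
  ∃ n, ∀ j, n ≤ j → M (seg T j) = M (seg T n)

/-- Confident learning with hypothesis space `H`: explanatory learning with
convergence on every text for every subset of ℕ. -/
def ConfLearnsIn (H : ℕ → Set ℕ) (M : Learner) (C : Set (Set ℕ)) : Prop :=
  ExLearnsIn H M C ∧ ∀ T, ConvergesOn M T

/-- Vacillatory learning with hypothesis space `H`. -/
def VacLearnsIn (H : ℕ → Set ℕ) (M : Learner) (C : Set (Set ℕ)) : Prop :=
  BCLearnsIn H M C ∧
    ∀ L ∈ C, ∀ T, IsText T L → {h : Option ℕ | ∃ n, 1 ≤ n ∧ M (seg T n) = h}.Finite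

/-- Weakly confident learning with hypothesis space `H`: explanatory learning
with convergence on every text consistent with the class. -/
def WConfLearnsIn (H : ℕ → Set ℕ) (M : Learner) (C : Set (Set ℕ)) : Prop :=
  ExLearnsIn H M C ∧ ∀ T, (∃ L ∈ C, cntT T ⊆ L) → ConvergesOn M T

def ExLearnable (C : Set (Set ℕ)) : Prop :=
  ∃ M : Learner, Computable M ∧ ExLearnsIn W M C

def BCLearnable (C : Set (Set ℕ)) : Prop :=
  ∃ M : Learner, Computable M ∧ BCLearnsIn W M C

def FinLearnable (C : Set (Set ℕ)) : Prop :=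
  ∃ M : Learner, Computable M ∧ FinLearnsIn W M C

def ConfLearnable (C : Set (Set ℕ)) : Prop :=
  ∃ M : Learner, Computable M ∧ ConfLearnsIn W M C

def VacLearnable (C : Set (Set ℕ)) : Prop :=
  ∃ M : Learner, Computable M ∧ VacLearnsIn W M C

def WConfLearnable (C : Set (Set ℕ)) : Prop :=
  ∃ M : Learner, Computable M ∧ WConfLearnsIn W M C


/-- `M` is conservative (with hypothesis space `W`): on any text, whenever `M`
abandons a proper hypothesis, that hypothesis fails to contain the content of
the data seen so far. -/
def Conservative (M : Learner) : Prop :=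
  ∀ T : ℕ → Option ℕ, ∀ n k, 1 ≤ k → ∀ e, M (seg T n) = some e →
    M (seg T (n + k)) ≠ M (seg T n) → ¬ cntL (seg T (n + k)) ⊆ W e

/-! ### Auxiliary material for Statement 18 -/

section Stmt18Aux

open Nat.Partrec (Code)
open Nat.Partrec.Code

variable (η : PosEq)

private lemma rel_refl (x : ℕ) : η.rel x x := η.equiv.refl x
private lemma rel_symm {x y : ℕ} (h : η.rel x y) : η.rel y x := η.equiv.symm h
private lemma rel_trans {x y z : ℕ} (h : η.rel x y) (h' : η.rel y z) : η.rel x z :=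
  η.equiv.trans h h'

/-- The predicate whose `Nat.nth` is `a η`. -/
private abbrev LRep : ℕ → Prop := fun x => ∀ y, η.rel x y → x ≤ y

private lemma a_def (n : ℕ) : a η n = Nat.nth (LRep η) n := rfl

/-- The least element of the class of `x`. -/
private noncomputable def minOf (x : ℕ) : ℕ := sInf {y | η.rel x y}

private lemma minOf_rel (x : ℕ) : η.rel x (minOf η x) :=
  Nat.sInf_mem ⟨x, rel_refl η x⟩

private lemma minOf_le (x : ℕ) : minOf η x ≤ x := Nat.sInf_le (rel_refl η x)

private lemma minOf_lrep (x : ℕ) : LRep η (minOf η x) := by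
  intro w hw
  exact Nat.sInf_le (rel_trans η (minOf_rel η x) hw)

private lemma classOf_eq_of_rel {x y : ℕ} (h : η.rel x y) :
    {w | η.rel x w} = {w | η.rel y w} := by
  ext w
  exact ⟨fun hw => rel_trans η (rel_symm η h) hw, fun hw => rel_trans η h hw⟩

private lemma lrep_infinite : {x | LRep η x}.Infinite := by
  have hsub : Set.range (minOf η) ⊆ {x | LRep η x} := by
    rintro _ ⟨x, rfl⟩
    exact minOf_lrep η x
  refine Set.Infinite.mono hsub ?_
  intro hfin
  apply η.classes_infinite
  have : (Set.range fun x => {y | η.rel x y}) =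
      (fun z => {y | η.rel z y}) '' Set.range (minOf η) := by
    ext S
    constructor
    · rintro ⟨x, rfl⟩
      exact ⟨minOf η x, ⟨x, rfl⟩, (classOf_eq_of_rel η (minOf_rel η x)).symm⟩
    · rintro ⟨z, ⟨x, rfl⟩, rfl⟩
      exact ⟨minOf η x, rfl⟩
  rw [this]
  exact hfin.image _

private lemma a_strictMono : StrictMono (a η) :=
  Nat.nth_strictMono (lrep_infinite η)

private lemma a_lrep (n : ℕ) : LRep η (a η n) :=
  Nat.nth_mem_of_infinite (lrep_infinite η) n

private lemma mem_A_of_lt {z m : ℕ} (h : z < a η m) : z ∈ A η m := by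
  classical
  set r := minOf η z with hr
  have hrz : η.rel z r := minOf_rel η z
  have hlr : LRep η r := minOf_lrep η z
  have hra : r < a η m := lt_of_le_of_lt (minOf_le η z) h
  set j := Nat.count (LRep η) r with hj
  have hnth : Nat.nth (LRep η) j = r := Nat.nth_count hlr
  have hjm : j < m := by
    have : a η j < a η m := by rw [a_def, hnth]; exact hra
    exact (a_strictMono η).lt_iff_lt.mp this
  exact ⟨j, hjm, by rw [a_def, hnth]; exact rel_symm η hrz⟩

private lemma a_not_mem_A (m : ℕ) : a η m ∉ A η m := by
  rintro ⟨j, hj, hrel⟩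
  have h1 : a η m ≤ a η j := a_lrep η m _ (rel_symm η hrel)
  have h2 : a η j < a η m := a_strictMono η hj
  omega

/-- The `c`-th punctured hypothesis set. -/
private def Hp (c : ℕ) : Set ℕ := {x | x ≠ c ∧ ∃ y, y < c ∧ η.rel x y}

private lemma A_eq_Hp (m : ℕ) : A η m = Hp η (a η m) := by
  ext x
  constructor
  · rintro ⟨j, hj, hrel⟩
    refine ⟨?_, a η j, a_strictMono η hj, rel_symm η hrel⟩
    rintro rfl
    exact a_not_mem_A η m ⟨j, hj, hrel⟩
  · rintro ⟨hne, y, hy, hrel⟩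
    obtain ⟨j, hj, hrel'⟩ := mem_A_of_lt η hy
    exact ⟨j, hj, rel_trans η hrel' (rel_symm η hrel)⟩

/-! #### The hypothesis indices -/

private noncomputable def e0 : ℕ := Classical.choose η.re

private lemma e0_spec (x y : ℕ) : η.rel x y ↔ Nat.pair x y ∈ W (e0 η) :=
  Classical.choose_spec η.re x y

private noncomputable def c0 : Code := Denumerable.ofNat Code (e0 η)

private lemma rel_iff_evaln (x y : ℕ) :
    η.rel x y ↔ ∃ s, (evaln s (c0 η) (Nat.pair x y)).isSome = true := by
  rw [e0_spec η x y]
  show (evalCode (e0 η) (Nat.pair x y)).Dom ↔ _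
  rw [Part.dom_iff_mem]
  constructor
  · rintro ⟨v, hv⟩
    obtain ⟨k, hk⟩ := evaln_complete.mp hv
    exact ⟨k, by rw [Option.isSome_iff_exists]; exact ⟨v, hk⟩⟩
  · rintro ⟨s, hs⟩
    obtain ⟨v, hv⟩ := Option.isSome_iff_exists.mp hs
    exact ⟨v, evaln_complete.mpr ⟨s, hv⟩⟩

private noncomputable def chk (p n : ℕ) : Bool :=
  (!(p.unpair.2 == p.unpair.1)) && decide (n.unpair.1 < p.unpair.1) &&
    (evaln n.unpair.2 (c0 η) (Nat.pair p.unpair.2 n.unpair.1)).isSome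

private noncomputable def Fp : ℕ →. ℕ :=
  fun p => (Nat.rfind fun n => Part.some (chk η p n)).map fun _ => 0

private lemma Fp_dom (p : ℕ) :
    (Fp η p).Dom ↔ p.unpair.2 ∈ Hp η p.unpair.1 := by
  have : (Fp η p).Dom ↔ (Nat.rfind fun n => Part.some (chk η p n)).Dom := by
    simp [Fp, Part.map]
  rw [this]
  refine Nat.rfind_dom.trans ?_
  constructor
  · rintro ⟨n, hn, -⟩
    have hn' : chk η p n = true := by simpa [Part.mem_some_iff] using hn
    simp only [chk, Bool.and_eq_true, Bool.not_eq_true', beq_eq_false_iff_ne,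
      decide_eq_true_eq] at hn'
    obtain ⟨⟨hne, hlt⟩, hev⟩ := hn'
    exact ⟨hne, n.unpair.1, hlt, (rel_iff_evaln η _ _).mpr ⟨n.unpair.2, hev⟩⟩
  · rintro ⟨hne, y, hy, hrel⟩
    obtain ⟨s, hs⟩ := (rel_iff_evaln η _ _).mp hrel
    refine ⟨Nat.pair y s, ?_, fun {m} _ => trivial⟩
    simp [Part.mem_some_iff, chk, Nat.unpair_pair, hne, hy, hs]

private lemma chk_primrec : Primrec₂ (chk η) := by
  have h1 : Primrec fun q : ℕ × ℕ => (!(q.1.unpair.2 == q.1.unpair.1)) :=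
    Primrec.not.comp (Primrec.beq.comp
      (Primrec.snd.comp (Primrec.unpair.comp Primrec.fst))
      (Primrec.fst.comp (Primrec.unpair.comp Primrec.fst)))
  have h2 : Primrec fun q : ℕ × ℕ => decide (q.2.unpair.1 < q.1.unpair.1) :=
    Primrec.nat_lt.comp (Primrec.fst.comp (Primrec.unpair.comp Primrec.snd))
      (Primrec.fst.comp (Primrec.unpair.comp Primrec.fst)) |>.decide
  have h3 : Primrec fun q : ℕ × ℕ =>
      (evaln q.2.unpair.2 (c0 η) (Nat.pair q.1.unpair.2 q.2.unpair.1)).isSome :=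
    Primrec.option_isSome.comp <| primrec_evaln.comp <|
      (((Primrec.snd.comp (Primrec.unpair.comp Primrec.snd)).pair
        (Primrec.const (c0 η))).pair
        (Primrec₂.natPair.comp (Primrec.snd.comp (Primrec.unpair.comp Primrec.fst))
          (Primrec.fst.comp (Primrec.unpair.comp Primrec.snd))))
  have hall : Primrec fun q : ℕ × ℕ => chk η q.1 q.2 :=
    ((Primrec.dom_bool₂ (· && ·)).comp
      ((Primrec.dom_bool₂ (· && ·)).comp h1 h2) h3).of_eq fun q => rfl
  exact hall.to₂

private lemma Fp_partrec : Partrec (Fp η) := by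
  have h : Partrec₂ fun (p n : ℕ) => (Part.some (chk η p n) : Part Bool) :=
    Computable₂.partrec₂ (Primrec₂.to_comp (chk_primrec η))
  exact (Partrec.rfind h).map ((Computable.const 0).comp Computable.fst).to₂

private noncomputable def cF : Code :=
  Classical.choose (exists_code.mp (Partrec.nat_iff.mp (Fp_partrec η)))

private lemma cF_spec : eval (cF η) = Fp η :=
  Classical.choose_spec (exists_code.mp (Partrec.nat_iff.mp (Fp_partrec η)))

/-- Hypothesis index: `W (hcode η c) = Hp η c`. -/
private noncomputable def hcode (c : ℕ) : ℕ := Encodable.encode (curry (cF η) c)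

private lemma W_hcode (c : ℕ) : W (hcode η c) = Hp η c := by
  ext x
  show (evalCode (hcode η c) x).Dom ↔ _
  have : evalCode (hcode η c) x = Fp η (Nat.pair c x) := by
    show eval (Denumerable.ofNat Code (Encodable.encode (curry (cF η) c))) x = _
    rw [Denumerable.ofNat_encode, eval_curry, cF_spec]
  rw [this, Fp_dom, Nat.unpair_pair]

private lemma hcode_primrec : Primrec (hcode η) :=
  Primrec.encode.comp (primrec₂_curry.comp (Primrec.const (cF η)) Primrec.id)

/-! #### The learner -/

private def memB (c : ℕ) (K : List ℕ) : Bool :=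
  K.foldr (fun z b => (z == c) || b) false

private lemma memB_iff {c : ℕ} {K : List ℕ} : memB c K = true ↔ c ∈ K := by
  induction K with
  | nil => simp [memB]
  | cons z K ih => simp [memB, List.foldr_cons] at ih ⊢
                   rw [ih]
                   constructor
                   · rintro (h | h)
                     · exact Or.inl (by simpa using h.symm)
                     · exact Or.inr h
                   · rintro (rfl | h)
                     · exact Or.inl (by simp)
                     · exact Or.inr h

private def stepF (p : List ℕ × ℕ) : ℕ := cond (memB p.2 p.1) (p.2 + 1) p.2

private def searchUp (K : List ℕ) (f t : ℕ) : ℕ :=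
  (List.range f).foldr (fun _ u => stepF (K, u)) t

private lemma searchUp_zero (K : List ℕ) (t : ℕ) : searchUp K 0 t = t := rfl

private lemma searchUp_succ (K : List ℕ) (f t : ℕ) :
    searchUp K (f + 1) t = searchUp K f (stepF (K, t)) := by
  simp [searchUp, List.range_succ, List.foldr_append]

private lemma stepF_of_mem {K : List ℕ} {t : ℕ} (h : t ∈ K) : stepF (K, t) = t + 1 := by
  simp [stepF, memB_iff.mpr h]

private lemma stepF_of_not_mem {K : List ℕ} {t : ℕ} (h : t ∉ K) : stepF (K, t) = t := by
  have : memB t K = false := by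
    rw [Bool.eq_false_iff]
    intro hc
    exact h (memB_iff.mp hc)
  simp [stepF, this]

private lemma searchUp_of_not_mem {K : List ℕ} {t : ℕ} (h : t ∉ K) (f : ℕ) :
    searchUp K f t = t := by
  induction f with
  | zero => rfl
  | succ f ih => rw [searchUp_succ, stepF_of_not_mem h, ih]

private lemma searchUp_ge (K : List ℕ) (f t : ℕ) : t ≤ searchUp K f t := by
  induction f generalizing t with
  | zero => simp [searchUp_zero]
  | succ f ih =>
    rw [searchUp_succ]
    refine le_trans ?_ (ih (stepF (K, t)))
    by_cases h : t ∈ K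
    · rw [stepF_of_mem h]; omega
    · rw [stepF_of_not_mem h]

private lemma searchUp_mem_below {K : List ℕ} {f t w : ℕ} (h1 : t ≤ w)
    (h2 : w < searchUp K f t) : w ∈ K := by
  induction f generalizing t with
  | zero => rw [searchUp_zero] at h2; omega
  | succ f ih =>
    by_cases h : t ∈ K
    · rw [searchUp_succ, stepF_of_mem h] at h2
      rcases eq_or_lt_of_le h1 with rfl | hlt
      · exact h
      · exact ih hlt h2
    · rw [searchUp_of_not_mem h] at h2; omega

private lemma searchUp_result (K : List ℕ) (f t : ℕ) :
    searchUp K f t ∉ K ∨ searchUp K f t = t + f := by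
  induction f generalizing t with
  | zero => right; simp [searchUp_zero]
  | succ f ih =>
    by_cases h : t ∈ K
    · rw [searchUp_succ, stepF_of_mem h]
      rcases ih (t + 1) with h' | h'
      · exact Or.inl h'
      · right; omega
    · left; rw [searchUp_of_not_mem h]; exact h

private lemma exists_not_mem_interval (K : List ℕ) (t : ℕ) :
    ∃ w, t ≤ w ∧ w ≤ t + K.length ∧ w ∉ K := by
  by_contra hcon
  push_neg at hcon
  have hsub : Finset.Icc t (t + K.length) ⊆ K.toFinset := by
    intro w hw
    rw [Finset.mem_Icc] at hw
    rw [List.mem_toFinset]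
    exact hcon w hw.1 hw.2
  have h1 := Finset.card_le_card hsub
  have h2 : (Finset.Icc t (t + K.length)).card = K.length + 1 := by
    rw [Nat.card_Icc]; omega
  have h3 := K.toFinset_card_le
  omega

private def Fstep (K : List ℕ) (c : ℕ) : ℕ :=
  cond (memB c K) (searchUp K (K.length + 1) (c + 1)) c

private lemma Fstep_of_not_mem {K : List ℕ} {c : ℕ} (h : c ∉ K) : Fstep K c = c := by
  have : memB c K = false := by
    rw [Bool.eq_false_iff]; intro hc; exact h (memB_iff.mp hc)
  simp [Fstep, this]

private lemma Fstep_gt_of_mem {K : List ℕ} {c : ℕ} (h : c ∈ K) : c < Fstep K c := by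
  have : Fstep K c = searchUp K (K.length + 1) (c + 1) := by
    simp [Fstep, memB_iff.mpr h]
  rw [this]
  have := searchUp_ge K (K.length + 1) (c + 1)
  omega

private lemma Fstep_ge (K : List ℕ) (c : ℕ) : c ≤ Fstep K c := by
  by_cases h : c ∈ K
  · exact le_of_lt (Fstep_gt_of_mem h)
  · rw [Fstep_of_not_mem h]

private lemma Fstep_ne_imp {K : List ℕ} {c : ℕ} (h : Fstep K c ≠ c) : c ∈ K := by
  by_contra hc
  exact h (Fstep_of_not_mem hc)

private lemma Fstep_not_mem_of_mem {K : List ℕ} {c : ℕ} (h : c ∈ K) : Fstep K c ∉ K := by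
  have heq : Fstep K c = searchUp K (K.length + 1) (c + 1) := by
    simp [Fstep, memB_iff.mpr h]
  rcases searchUp_result K (K.length + 1) (c + 1) with h' | h'
  · rw [heq]; exact h'
  · exfalso
    obtain ⟨w, hw1, hw2, hw3⟩ := exists_not_mem_interval K (c + 1)
    have : w < searchUp K (K.length + 1) (c + 1) := by omega
    exact hw3 (searchUp_mem_below hw1 this)

private lemma Fstep_min {K : List ℕ} {c w : ℕ} (h1 : c < w) (h2 : w ∉ K) :
    Fstep K c ≤ w := by
  by_cases h : c ∈ K
  · have heq : Fstep K c = searchUp K (K.length + 1) (c + 1) := by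
      simp [Fstep, memB_iff.mpr h]
    rw [heq]
    by_contra hcon
    push_neg at hcon
    exact h2 (searchUp_mem_below (by omega : c + 1 ≤ w) hcon)
  · rw [Fstep_of_not_mem h]; omega

private def updC (t : Option ℕ) (K : List ℕ) : List ℕ := Option.casesOn t K (· :: K)

private def stepRun (p : Option ℕ × (ℕ × List ℕ)) : ℕ × List ℕ :=
  (Fstep (updC p.1 p.2.2) p.2.1, updC p.1 p.2.2)

private def run (ρ : List (Option ℕ)) : ℕ × List ℕ :=
  ρ.foldr (fun t s => stepRun (t, s)) (0, [])

private lemma run_nil : run [] = (0, []) := rfl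

private lemma run_cons (t : Option ℕ) (ρ : List (Option ℕ)) :
    run (t :: ρ) = stepRun (t, run ρ) := rfl

private lemma run_content (ρ : List (Option ℕ)) (z : ℕ) :
    z ∈ (run ρ).2 ↔ some z ∈ ρ := by
  induction ρ with
  | nil => simp [run_nil]
  | cons t ρ ih =>
    rw [run_cons]
    cases t with
    | none => simpa [stepRun, updC] using ih
    | some x =>
      show z ∈ x :: (run ρ).2 ↔ _
      simp [ih]

private lemma run_le_a {m : ℕ} (ρ : List (Option ℕ))
    (hρ : ∀ z : ℕ, some z ∈ ρ → z ∈ A η m) : (run ρ).1 ≤ a η m := by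
  induction ρ with
  | nil => simp [run_nil]
  | cons t ρ ih =>
    have ih' : (run ρ).1 ≤ a η m := ih fun z hz => hρ z (List.mem_cons_of_mem t hz)
    rw [run_cons]
    show Fstep (updC t (run ρ).2) (run ρ).1 ≤ a η m
    set K := updC t (run ρ).2 with hK
    have hKmem : ∀ z : ℕ, z ∈ K → some z ∈ t :: ρ := by
      intro z hz
      cases t with
      | none =>
        have : z ∈ (run ρ).2 := hz
        exact List.mem_cons_of_mem _ ((run_content ρ z).mp this)
      | some x =>
        rcases List.mem_cons.mp hz with rfl | hz'
        · exact List.mem_cons_self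
        · exact List.mem_cons_of_mem _ ((run_content ρ z).mp hz')
    by_cases hc : (run ρ).1 ∈ K
    · have hcA : (run ρ).1 ∈ A η m := hρ _ (hKmem _ hc)
      have hne : (run ρ).1 ≠ a η m := by
        rintro heq
        exact a_not_mem_A η m (heq ▸ hcA)
      have hlt : (run ρ).1 < a η m := lt_of_le_of_ne ih' hne
      have haK : a η m ∉ K := by
        intro hmem
        exact a_not_mem_A η m (hρ _ (hKmem _ hmem))
      exact Fstep_min hlt haK
    · rw [Fstep_of_not_mem hc]; exact ih'

/-- Current conjecture value after seeing `σ`. -/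
private def Cfun (σ : List (Option ℕ)) : ℕ := (run σ.reverse).1

/-- The learner. -/
private noncomputable def Mlearner : Learner := fun σ => some (hcode η (Cfun σ))

private lemma seg_succ (T : ℕ → Option ℕ) (n : ℕ) :
    seg T (n + 1) = seg T n ++ [T n] := by
  simp [seg, List.range_succ]

private lemma mem_seg {T : ℕ → Option ℕ} {n : ℕ} {t : Option ℕ} :
    t ∈ seg T n ↔ ∃ p, p < n ∧ T p = t := by
  simp [seg]

private lemma Cfun_succ (T : ℕ → Option ℕ) (n : ℕ) :
    Cfun (seg T (n + 1)) =
      Fstep (updC (T n) (run (seg T n).reverse).2) (Cfun (seg T n)) := by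
  unfold Cfun
  rw [seg_succ, List.reverse_append]
  rfl

private lemma Cfun_mono (T : ℕ → Option ℕ) {n j : ℕ} (h : n ≤ j) :
    Cfun (seg T n) ≤ Cfun (seg T j) := by
  induction j with
  | zero =>
    have hn0 : n = 0 := by omega
    subst hn0; exact le_rfl
  | succ j ih =>
    rcases eq_or_lt_of_le h with rfl | hlt
    · exact le_rfl
    · have h1 := ih (Nat.lt_succ_iff.mp hlt)
      have h2 : Cfun (seg T j) ≤ Cfun (seg T (j + 1)) := by
        rw [Cfun_succ]; exact Fstep_ge _ _
      omega

private lemma Cfun_le_a {m : ℕ} {T : ℕ → Option ℕ} (hT : cntT T ⊆ A η m) (n : ℕ) :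
    Cfun (seg T n) ≤ a η m := by
  apply run_le_a
  intro z hz
  rw [List.mem_reverse] at hz
  obtain ⟨p, hp, hTp⟩ := mem_seg.mp hz
  exact hT ⟨p, hTp⟩

/-- On a text for `A η m`, the conjecture value stabilizes to `a η m`. -/
private lemma Cfun_converges {m : ℕ} {T : ℕ → Option ℕ} (hT : IsText T (A η m)) :
    ∃ N, (∀ j, N ≤ j → Cfun (seg T j) = Cfun (seg T N)) ∧
      Cfun (seg T N) = a η m := by
  have hsub : cntT T ⊆ A η m := le_of_eq hT
  have hbdd : BddAbove (Set.range fun n => Cfun (seg T n)) :=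
    ⟨a η m, by rintro _ ⟨n, rfl⟩; exact Cfun_le_a η hsub n⟩
  have hne : (Set.range fun n => Cfun (seg T n)).Nonempty := ⟨_, 0, rfl⟩
  obtain ⟨N, hN⟩ := Nat.sSup_mem hne hbdd
  have hN' : Cfun (seg T N) = sSup (Set.range fun n => Cfun (seg T n)) := hN
  have hstab : ∀ j, N ≤ j → Cfun (seg T j) = Cfun (seg T N) := by
    intro j hj
    refine le_antisymm ?_ (Cfun_mono T hj)
    rw [hN']
    exact le_csSup hbdd ⟨j, rfl⟩
  refine ⟨N, hstab, ?_⟩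
  set c := Cfun (seg T N) with hc
  have hcle : c ≤ a η m := Cfun_le_a η hsub N
  rcases eq_or_lt_of_le hcle with heq | hlt
  · exact heq
  · exfalso
    have hcA : c ∈ A η m := mem_A_of_lt η hlt
    have : c ∈ cntT T := hT ▸ hcA
    obtain ⟨p, hp⟩ := this
    set n := max N p + 1 with hn
    have hn1 : N ≤ n := by omega
    have hn2 : p < n + 1 := by omega
    have hcn : Cfun (seg T n) = c := hstab n hn1
    have hmem : c ∈ updC (T n) (run (seg T n).reverse).2 := by
      have hsome : some c ∈ seg T (n + 1) := mem_seg.mpr ⟨p, hn2, hp⟩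
      have : c ∈ (run (seg T (n + 1)).reverse).2 := by
        rw [run_content, List.mem_reverse]; exact hsome
      rw [seg_succ, List.reverse_append] at this
      exact this
    have := Fstep_gt_of_mem hmem
    rw [← hcn] at this
    rw [← Cfun_succ] at this
    have hstab' := hstab (n + 1) (by omega)
    rw [hstab', hcn] at this
    omega

private lemma Mlearner_primrec : Primrec (Mlearner η) := by
  have hmemB : Primrec₂ memB := by
    have h : Primrec₂ fun (a : ℕ × List ℕ) (p : ℕ × Bool) => (p.1 == a.1) || p.2 := by
      have hb : Primrec fun q : (ℕ × List ℕ) × (ℕ × Bool) => (q.2.1 == q.1.1) || q.2.2 :=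
        (Primrec.dom_bool₂ (· || ·)).comp
          (Primrec.beq.comp (Primrec.fst.comp Primrec.snd) (Primrec.fst.comp Primrec.fst))
          (Primrec.snd.comp Primrec.snd)
      exact hb.to₂
    have hb : Primrec fun a : ℕ × List ℕ => memB a.1 a.2 :=
      (Primrec.list_foldr (Primrec.snd :
        Primrec fun a : ℕ × List ℕ => a.2) (Primrec.const false) h).of_eq
        fun a => rfl
    exact hb.to₂
  have hstepF : Primrec stepF :=
    Primrec.cond (hmemB.comp Primrec.snd Primrec.fst)
      (Primrec.succ.comp Primrec.snd) Primrec.snd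
  have hsearchUp : Primrec fun q : List ℕ × (ℕ × ℕ) => searchUp q.1 q.2.1 q.2.2 := by
    have h : Primrec₂ fun (q : List ℕ × (ℕ × ℕ)) (p : ℕ × ℕ) => stepF (q.1, p.2) :=
      (hstepF.comp ((Primrec.fst.comp Primrec.fst).pair
        (Primrec.snd.comp Primrec.snd))).to₂
    exact (Primrec.list_foldr
      (Primrec.list_range.comp (Primrec.fst.comp Primrec.snd))
      (Primrec.snd.comp Primrec.snd) h).of_eq fun q => rfl
  have hFstep : Primrec₂ Fstep := by
    have hb : Primrec fun q : List ℕ × ℕ =>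
        cond (memB q.2 q.1) (searchUp q.1 (q.1.length + 1) (q.2 + 1)) q.2 :=
      Primrec.cond (hmemB.comp Primrec.snd Primrec.fst)
        (hsearchUp.comp (Primrec.fst.pair
          (((Primrec.succ.comp (Primrec.list_length.comp Primrec.fst))).pair
            (Primrec.succ.comp Primrec.snd))))
        Primrec.snd
    exact hb.to₂
  have hupdC : Primrec₂ updC := by
    have hb : Primrec fun p : Option ℕ × List ℕ => updC p.1 p.2 :=
      (Primrec.option_casesOn (Primrec.fst :
          Primrec fun p : Option ℕ × List ℕ => p.1) Primrec.snd
        ((Primrec.list_cons.comp Primrec.snd (Primrec.snd.comp Primrec.fst)).to₂)).of_eq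
        fun p => by rcases p with ⟨t, K⟩; cases t <;> rfl
    exact hb.to₂
  have hstepRun : Primrec stepRun := by
    have hKp : Primrec fun p : Option ℕ × (ℕ × List ℕ) => updC p.1 p.2.2 :=
      hupdC.comp Primrec.fst (Primrec.snd.comp Primrec.snd)
    exact (hFstep.comp hKp (Primrec.fst.comp Primrec.snd)).pair hKp
  have hrun : Primrec run := by
    have h : Primrec₂ fun (_ : List (Option ℕ)) (p : Option ℕ × (ℕ × List ℕ)) =>
        stepRun p := (hstepRun.comp Primrec.snd).to₂
    exact (Primrec.list_foldr Primrec.id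
      (Primrec.const ((0 : ℕ), ([] : List ℕ))) h).of_eq fun ρ => rfl
  have hCfun : Primrec Cfun :=
    Primrec.fst.comp (hrun.comp Primrec.list_reverse)
  exact Primrec.option_some.comp ((hcode_primrec η).comp hCfun)

end Stmt18Aux

/-- For every positive equivalence relation η all of whose
equivalence classes are infinite, the ascending family 𝒜_η is conservatively
explanatorily learnable. -/
theorem stmt18 (η : PosEq) (h : ∀ x : ℕ, (classOf η x).Infinite) :
    ∃ M : Learner, Computable M ∧ ExLearnsIn W M (ascendingFamily η) ∧
      Conservative M := by
  classical
  refine ⟨Mlearner η, (Mlearner_primrec η).to_comp, ?_, ?_⟩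
  · rintro L ⟨m, rfl⟩ T hT
    obtain ⟨N, hstab, hval⟩ := Cfun_converges η hT
    refine ⟨N, hcode η (a η m), ?_, ?_, ?_⟩
    · show some (hcode η (Cfun (seg T N))) = some (hcode η (a η m))
      rw [hval]
    · rw [W_hcode]
      exact (A_eq_Hp η m).symm
    · intro j hj
      show some (hcode η (Cfun (seg T j))) = some (hcode η (Cfun (seg T N)))
      rw [hstab j hj]
  · intro T n k hk e hMn hne hsub
    set c := Cfun (seg T n) with hc
    have he : e = hcode η c := by
      have h' : some (hcode η c) = some e := hMn
      exact (Option.some.inj h').symm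
    have hCne : Cfun (seg T (n + k)) ≠ c := by
      intro heq
      apply hne
      show some (hcode η (Cfun (seg T (n + k)))) = some (hcode η c)
      rw [heq]
    have hexists : ∃ i, Cfun (seg T (n + i)) ≠ c := ⟨k, hCne⟩
    set j := Nat.find hexists with hj
    have hjspec : Cfun (seg T (n + j)) ≠ c := Nat.find_spec hexists
    have hjle : j ≤ k := Nat.find_min' hexists hCne
    have hjpos : 1 ≤ j := by
      by_contra h0
      apply hjspec
      have hj0 : j = 0 := by omega
      rw [hj0, Nat.add_zero]
    have hprev : Cfun (seg T (n + (j - 1))) = c := by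
      rcases Nat.eq_zero_or_pos (j - 1) with h0 | hpos
      · rw [h0, Nat.add_zero]
      · have hm := Nat.find_min hexists (show j - 1 < j by omega)
        exact not_not.mp hm
    have hstep : Cfun (seg T (n + j)) =
        Fstep (updC (T (n + (j - 1))) (run (seg T (n + (j - 1))).reverse).2) c := by
      rw [show n + j = n + (j - 1) + 1 by omega, Cfun_succ, hprev]
    have hcK : c ∈ updC (T (n + (j - 1))) (run (seg T (n + (j - 1))).reverse).2 := by
      apply Fstep_ne_imp
      rw [← hstep]
      exact hjspec
    have hcseg : some c ∈ seg T (n + j) := by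
      have hmem : c ∈ (run (seg T (n + (j - 1)) ++ [T (n + (j - 1))]).reverse).2 := by
        rw [List.reverse_append]
        exact hcK
      rw [← seg_succ, run_content, List.mem_reverse] at hmem
      rw [show n + j = n + (j - 1) + 1 by omega]
      exact hmem
    have hcsegk : c ∈ cntL (seg T (n + k)) := by
      obtain ⟨p, hp, hTp⟩ := mem_seg.mp hcseg
      exact mem_seg.mpr ⟨p, by omega, hTp⟩
    have hfinal := hsub hcsegk
    rw [he, W_hcode] at hfinal
    exact hfinal.1 rfl

end PEL
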